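/- Let ψ : U → ℝⁿ be a C² map on an open set U ⊆ ℝᵐ, and let u : (−1, 1) → U and a : (−1, 1) → ℝⁿ be C¹ curves satisfying Dψ(u(t))ᵀ(a(t) − ψ(u(t))) = 0 for all t ∈ (−1,1). Then Dψ(u(0))ᵀ a′(0) = H u′(0), where H is the Hessian at u(0) of the function u ↦ ½‖a(0) − ψ(u)‖². -/

import Mathlib

open scoped RealInnerProductSpace

noncomputable section

/-- The adjoint, as a continuous `ℝ`-linear map. -/
noncomputable def adjCLM (m n : ℕ) :
    (EuclideanSpace ℝ (Fin m) →L[ℝ] EuclideanSpace ℝ (Fin n)) →L[ℝ]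
      (EuclideanSpace ℝ (Fin n) →L[ℝ] EuclideanSpace ℝ (Fin m)) :=
  { toFun := ContinuousLinearMap.adjoint
    map_add' := fun A B => map_add _ A B
    map_smul' := fun r A => by
      simp [LinearIsometryEquiv.map_smulₛₗ]
    cont := ContinuousLinearMap.adjoint.continuous }

@[simp] lemma adjCLM_apply {m n : ℕ}
    (A : EuclideanSpace ℝ (Fin m) →L[ℝ] EuclideanSpace ℝ (Fin n)) :
    adjCLM m n A = ContinuousLinearMap.adjoint A := rfl

/-- `x ↦ ⟪x, ·⟫` as a continuous `ℝ`-linear map. -/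
noncomputable def iotaCLM (m : ℕ) :
    EuclideanSpace ℝ (Fin m) →L[ℝ] (EuclideanSpace ℝ (Fin m) →L[ℝ] ℝ) :=
  { toFun := fun x => innerSL ℝ x
    map_add' := fun x y => by ext w; simp [inner_add_left]
    map_smul' := fun r x => by ext w; simp [inner_smul_left]
    cont := (innerSL ℝ).continuous }

@[simp] lemma iotaCLM_apply {m : ℕ} (x w : EuclideanSpace ℝ (Fin m)) :
    iotaCLM m x w = ⟪x, w⟫ := rfl


/-- Chart formulation of Proposition A.1 (Weyl): for curves `(a(t), u(t))` staying in the
critical point locus, `Dψ(u(0))ᵀ a′(0) = H u′(0)` with `H` the Hessian of the distance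
function. -/
theorem stmt_11 {m n : ℕ}
    (U : Set (EuclideanSpace ℝ (Fin m))) (hU : IsOpen U)
    (ψ : EuclideanSpace ℝ (Fin m) → EuclideanSpace ℝ (Fin n))
    (hψ : ContDiffOn ℝ 2 ψ U)
    (u : ℝ → EuclideanSpace ℝ (Fin m)) (a : ℝ → EuclideanSpace ℝ (Fin n))
    (hu : ContDiffOn ℝ 1 u (Set.Ioo (-1 : ℝ) 1))
    (ha : ContDiffOn ℝ 1 a (Set.Ioo (-1 : ℝ) 1))
    (hmem : ∀ t ∈ Set.Ioo (-1 : ℝ) 1, u t ∈ U)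
    (hcrit : ∀ t ∈ Set.Ioo (-1 : ℝ) 1,
      ContinuousLinearMap.adjoint (fderiv ℝ ψ (u t)) (a t - ψ (u t)) = 0)
    (H : EuclideanSpace ℝ (Fin m) →L[ℝ] EuclideanSpace ℝ (Fin m))
    (hH : ∀ v w, ⟪H v, w⟫ =
      fderiv ℝ (fderiv ℝ (fun z => (1 / 2 : ℝ) * ‖a 0 - ψ z‖ ^ 2)) (u 0) v w) :
    ContinuousLinearMap.adjoint (fderiv ℝ ψ (u 0)) (deriv a 0) = H (deriv u 0) := by
  have h0 : (0:ℝ) ∈ Set.Ioo (-1:ℝ) 1 := by norm_num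
  have hIoo : Set.Ioo (-1:ℝ) 1 ∈ nhds (0:ℝ) := isOpen_Ioo.mem_nhds h0
  have hu0U : u 0 ∈ U := hmem 0 h0
  have hUmem : U ∈ nhds (u 0) := hU.mem_nhds hu0U
  set a0 := a 0 with ha0def
  -- ψ is differentiable on U
  have hψd : ∀ z ∈ U, DifferentiableAt ℝ ψ z := fun z hz =>
    ((hψ.differentiableOn (by norm_num)).differentiableAt (hU.mem_nhds hz))
  -- the derivative of ψ is differentiable at u 0
  have hfd : DifferentiableAt ℝ (fun z => fderiv ℝ ψ z) (u 0) :=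
    ((hψ.fderiv_of_isOpen hU (show (1 : WithTop ℕ∞) + 1 ≤ 2 by norm_num)).differentiableOn one_ne_zero).differentiableAt hUmem
  -- the negative gradient field
  set g : EuclideanSpace ℝ (Fin m) → EuclideanSpace ℝ (Fin m) :=
    fun z => adjCLM m n (fderiv ℝ ψ z) (ψ z - a0) with hgdef
  have hg : DifferentiableAt ℝ g (u 0) :=
    DifferentiableAt.clm_apply ((adjCLM m n).differentiableAt.comp (u 0) hfd)
      ((hψd _ hu0U).sub (differentiableAt_const a0))
  set G' := fderiv ℝ g (u 0) with hG'def
  -- key : the first derivative of the distance function on U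
  have key : ∀ z ∈ U, fderiv ℝ (fun z => (1 / 2 : ℝ) * ‖a0 - ψ z‖ ^ 2) z
      = iotaCLM m (g z) := by
    intro z hz
    have hψz : HasFDerivAt ψ (fderiv ℝ ψ z) z := (hψd z hz).hasFDerivAt
    have h1 : HasFDerivAt (fun y => a0 - ψ y) (0 - fderiv ℝ ψ z) z :=
      (hasFDerivAt_const a0 z).sub hψz
    have h2 := (h1.inner ℝ h1).const_mul (1/2 : ℝ)
    have h3 : HasFDerivAt (fun z => (1 / 2 : ℝ) * ‖a0 - ψ z‖ ^ 2)
        ((1/2 : ℝ) • ((fderivInnerCLM ℝ (a0 - ψ z, a0 - ψ z)).comp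
          (((0 : _) - fderiv ℝ ψ z).prod ((0 : _) - fderiv ℝ ψ z)))) z := by
      have e : (fun z => (1 / 2 : ℝ) * ‖a0 - ψ z‖ ^ 2) = fun y => 1 / 2 * ⟪a0 - ψ y, a0 - ψ y⟫ := by
        funext y; rw [real_inner_self_eq_norm_sq]
      rw [e]; exact h2
    have h4 : ((1/2 : ℝ) • ((fderivInnerCLM ℝ (a0 - ψ z, a0 - ψ z)).comp
          (((0 : _) - fderiv ℝ ψ z).prod ((0 : _) - fderiv ℝ ψ z)))) = iotaCLM m (g z) := by
      ext w
      simp only [ContinuousLinearMap.smul_apply, ContinuousLinearMap.comp_apply,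
        ContinuousLinearMap.prod_apply, fderivInnerCLM_apply, iotaCLM_apply, hgdef,
        adjCLM_apply, ContinuousLinearMap.sub_apply, ContinuousLinearMap.zero_apply,
        ContinuousLinearMap.adjoint_inner_left, real_inner_comm (a0 - ψ z)]
      rw [real_inner_comm]
      simp [inner_sub_right, inner_sub_left]
      rw [real_inner_comm (ψ z), real_inner_comm a0]
      ring
    rw [← h4]
    exact h3.fderiv
  -- the second derivative applied: ⟪H v, w⟫ = ⟪G' v, w⟫
  have hHG : ∀ v, H v = G' v := by
    intro v
    have heq : (fun z => fderiv ℝ (fun z => (1 / 2 : ℝ) * ‖a0 - ψ z‖ ^ 2) z)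
        =ᶠ[nhds (u 0)] (fun z => iotaCLM m (g z)) :=
      Filter.eventually_of_mem hUmem key
    have hcomp : fderiv ℝ (fun z => iotaCLM m (g z)) (u 0) = (iotaCLM m).comp G' := by
      rw [show (fun z => iotaCLM m (g z)) = (iotaCLM m) ∘ g from rfl,
        fderiv_comp _ (iotaCLM m).differentiableAt hg, ContinuousLinearMap.fderiv]
    apply ext_inner_right ℝ
    intro w
    have := hH v w
    rw [ha0def] at heq
    rw [heq.fderiv_eq, hcomp] at this
    simpa using this
  -- derivatives of the curves
  have hu0 : HasDerivAt u (deriv u 0) 0 :=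
    (((hu.differentiableOn one_ne_zero).differentiableAt hIoo)).hasDerivAt
  have ha0' : HasDerivAt a (deriv a 0) 0 :=
    (((ha.differentiableOn one_ne_zero).differentiableAt hIoo)).hasDerivAt
  -- LHS curve: g ∘ u
  have hga : HasDerivAt (fun t => g (u t)) (G' (deriv u 0)) 0 :=
    hg.hasFDerivAt.comp_hasDerivAt 0 hu0
  -- RHS curve
  have hB : HasDerivAt (fun t => adjCLM m n (fderiv ℝ ψ (u t)))
      (adjCLM m n (fderiv ℝ (fun z => fderiv ℝ ψ z) (u 0) (deriv u 0))) 0 := by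
    have h1 : HasDerivAt (fun t => fderiv ℝ ψ (u t))
        (fderiv ℝ (fun z => fderiv ℝ ψ z) (u 0) (deriv u 0)) 0 :=
      hfd.hasFDerivAt.comp_hasDerivAt 0 hu0
    exact (adjCLM m n).hasFDerivAt.comp_hasDerivAt 0 h1
  have hc : HasDerivAt (fun t => a t - a0) (deriv a 0) 0 := ha0'.sub_const a0
  have hBc := hB.clm_apply hc
  -- the two curves agree near 0
  have hEq : (fun t => adjCLM m n (fderiv ℝ ψ (u t)) (a t - a0))
      =ᶠ[nhds (0:ℝ)] (fun t => g (u t)) := by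
    refine Filter.eventually_of_mem hIoo (fun t ht => ?_)
    rw [hgdef]
    simp only [adjCLM_apply]
    rw [← sub_eq_zero, ← map_sub]
    have hrw : a t - a0 - (ψ (u t) - a0) = a t - ψ (u t) := by abel
    rw [hrw, hcrit t ht]
  have h2 : HasDerivAt (fun t => adjCLM m n (fderiv ℝ ψ (u t)) (a t - a0))
      (G' (deriv u 0)) 0 := hga.congr_of_eventuallyEq hEq
  have hfin := hBc.unique h2
  simp only [ha0def, sub_self, map_zero, zero_add] at hfin
  rw [hHG]
  exact hfin
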